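/- Let n ≥ 2 be a natural number, σ > 0 and ε > 0 real numbers, and let X be a random variable distributed according to the Gamma distribution with shape parameter n − 1 and rate parameter 1/σ² (equivalently, X = (σ²/2)·Y where Y is chi-squared with 2(n−1) degrees of freedom). Then P(X ≥ n(σ² + ε)) ≤ exp(−n·h(ε/σ²)), where h(x) := x − log(1 + x). -/

import Mathlib

open MeasureTheory ProbabilityTheory Real

/-- Chernoff-type tail bound for the Gamma distribution with shape `n − 1` and
rate `1/σ²` (i.e. `(σ²/2)·χ²_{2(n−1)}`): for `n ≥ 2`, `σ > 0`, `ε > 0`,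
`P(X ≥ n(σ² + ε)) ≤ exp(−n·h(ε/σ²))` where `h(x) = x − log(1+x)`. -/
theorem gamma_tail_bound (n : ℕ) (hn : 2 ≤ n) (σ ε : ℝ) (hσ : 0 < σ) (hε : 0 < ε) :
    gammaMeasure ((n : ℝ) - 1) (1 / σ ^ 2) {x : ℝ | (n : ℝ) * (σ ^ 2 + ε) ≤ x}
      ≤ ENNReal.ofReal
          (Real.exp (-(n : ℝ) * (ε / σ ^ 2 - Real.log (1 + ε / σ ^ 2)))) := by
  have hσ2 : (0:ℝ) < σ ^ 2 := by positivity
  set u : ℝ := ε / σ ^ 2 with hu_def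
  have hu : 0 < u := by positivity
  have h1u : (1:ℝ) < 1 + u := by linarith
  set k : ℝ := (n : ℝ) - 1 with hk_def
  have hk : 0 < k := by
    have : (2:ℝ) ≤ (n:ℝ) := by exact_mod_cast hn
    simp only [hk_def]; linarith
  set r : ℝ := 1 / σ ^ 2 with hr_def
  have hr : 0 < r := by positivity
  set r' : ℝ := r / (1 + u) with hr'_def
  have hr' : 0 < r' := by positivity
  set a : ℝ := (n : ℝ) * (σ ^ 2 + ε) with ha_def
  have hn1 : (0:ℝ) < n := by positivity
  have ha : 0 < a := by positivity
  have hrr' : r - r' = r * u / (1 + u) := by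
    field_simp [hr'_def]
    have h' : r' * (1 + u) = r := by
      rw [hr'_def]; exact div_mul_cancel₀ r (by linarith : (0:ℝ) < 1 + u).ne'
    linear_combination (-1:ℝ) * h'
  have hkey : (r - r') * a = (n : ℝ) * u := by
    rw [hrr', ha_def, hr_def, hu_def]
    field_simp
  set C : ℝ := (1 + u) ^ k * Real.exp (-((n:ℝ) * u)) with hC_def
  have hC : 0 ≤ C := by positivity
  -- pointwise bound
  have hpt : ∀ x ∈ {x : ℝ | a ≤ x},
      gammaPDF k r x ≤ ENNReal.ofReal C * gammaPDF k r' x := by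
    intro x hx
    have hax : a ≤ x := hx
    have hx0 : 0 ≤ x := le_trans ha.le hax
    rw [gammaPDF_of_nonneg hx0, gammaPDF_of_nonneg hx0, ← ENNReal.ofReal_mul hC]
    refine ENNReal.ofReal_le_ofReal ?_
    have hexp : Real.exp (-(r * x)) ≤ Real.exp (-((n:ℝ) * u)) * Real.exp (-(r' * x)) := by
      rw [← Real.exp_add, Real.exp_le_exp]
      have : (r - r') * a ≤ (r - r') * x := by
        apply mul_le_mul_of_nonneg_left hax
        have : 0 < r - r' := by
          rw [hrr']; positivity
        linarith
      rw [hkey] at this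
      nlinarith
    have hrk : r ^ k = (1 + u) ^ k * r' ^ k := by
      rw [← Real.mul_rpow (by linarith) hr'.le]
      congr 1
      field_simp [hr'_def]
      rw [hr'_def, mul_comm]; exact (div_mul_cancel₀ r (by linarith : (0:ℝ) < 1 + u).ne').symm
    calc r ^ k / Real.Gamma k * x ^ (k - 1) * Real.exp (-(r * x))
        ≤ r ^ k / Real.Gamma k * x ^ (k - 1) *
          (Real.exp (-((n:ℝ) * u)) * Real.exp (-(r' * x))) := by
          apply mul_le_mul_of_nonneg_left hexp
          have := Real.Gamma_pos_of_pos hk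
          positivity
      _ = (1 + u) ^ k * Real.exp (-((n:ℝ) * u)) *
          (r' ^ k / Real.Gamma k * x ^ (k - 1) * Real.exp (-(r' * x))) := by
          rw [hrk]; ring
  have hS : MeasurableSet {x : ℝ | a ≤ x} := measurableSet_Ici (a := a)
  have h1 : gammaMeasure k r {x : ℝ | a ≤ x}
      ≤ ENNReal.ofReal C := by
    rw [gammaMeasure, withDensity_apply _ hS]
    calc ∫⁻ x in {x : ℝ | a ≤ x}, gammaPDF k r x
        ≤ ∫⁻ x in {x : ℝ | a ≤ x}, ENNReal.ofReal C * gammaPDF k r' x :=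
          setLIntegral_mono (by
            exact (measurable_gammaPDFReal k r').ennreal_ofReal.const_mul _) hpt
      _ = ENNReal.ofReal C * ∫⁻ x in {x : ℝ | a ≤ x}, gammaPDF k r' x := by
          exact lintegral_const_mul' _ _ ENNReal.ofReal_ne_top
      _ ≤ ENNReal.ofReal C * ∫⁻ x, gammaPDF k r' x := by
          gcongr
          exact Measure.restrict_le_self
      _ = ENNReal.ofReal C := by
          rw [lintegral_gammaPDF_eq_one hk hr', mul_one]
  refine h1.trans (ENNReal.ofReal_le_ofReal ?_)
  -- C ≤ exp(-n (u - log(1+u)))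
  have hfinal : Real.exp (-(n:ℝ) * (u - Real.log (1 + u)))
      = (1 + u) ^ (n:ℝ) * Real.exp (-((n:ℝ) * u)) := by
    rw [Real.rpow_def_of_pos (by linarith), ← Real.exp_add]
    congr 1
    ring
  rw [hfinal, hC_def]
  apply mul_le_mul_of_nonneg_right _ (Real.exp_nonneg _)
  exact Real.rpow_le_rpow_of_exponent_le h1u.le (by simp [hk_def])
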